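/- The set of well-approximated irrational numbers contains a dense G_δ subset of ℝ; in particular, well-approximated irrational numbers are generic in the sense of Baire category. -/

import Mathlib

open Filter Topology

/-- Iterates of the Gauss map starting at `θ`. -/
noncomputable def gaussIter (θ : ℝ) : ℕ → ℝ
  | 0 => θ
  | k + 1 => (Int.fract (gaussIter θ k))⁻¹

/-- The `k`-th partial quotient (digit) of the continued fraction of `θ`. -/
noncomputable def cfA (θ : ℝ) (k : ℕ) : ℤ := ⌊gaussIter θ k⌋

/-- Numerators of the continued fraction convergents of `θ`. -/
noncomputable def cfP (θ : ℝ) : ℕ → ℤ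
  | 0 => cfA θ 0
  | 1 => cfA θ 1 * cfA θ 0 + 1
  | k + 2 => cfA θ (k + 2) * cfP θ (k + 1) + cfP θ k

/-- Denominators of the continued fraction convergents of `θ`. -/
noncomputable def cfQ (θ : ℝ) : ℕ → ℤ
  | 0 => 1
  | 1 => cfA θ 1
  | k + 2 => cfA θ (k + 2) * cfQ θ (k + 1) + cfQ θ k

/-- An irrational number `θ` is *well-approximated* if there is an increasing sequence
`k n` of natural numbers such that for every constant `C > 0`,
`exp (C * q (k n)) / q (k n + 1) → 0` as `n → ∞`. -/
def WellApproximated (θ : ℝ) : Prop :=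
  Irrational θ ∧ ∃ k : ℕ → ℕ, StrictMono k ∧ ∀ C : ℝ, 0 < C →
    Tendsto (fun n => Real.exp (C * (cfQ θ (k n) : ℝ)) / (cfQ θ (k n + 1) : ℝ))
      atTop (𝓝 0)

/- ### Basic facts -/

lemma fract_irr {θ : ℝ} (h : Irrational θ) : Irrational (Int.fract θ) := by
  rw [Int.fract]
  exact h.sub_intCast ⌊θ⌋

lemma fract_pos_irr {θ : ℝ} (h : Irrational θ) : 0 < Int.fract θ :=
  lt_of_le_of_ne (Int.fract_nonneg θ) (fun he => (fract_irr h).ne_int 0 (by simp [← he]))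

lemma gauss_shift (θ : ℝ) : ∀ k, gaussIter θ (k + 1) = gaussIter (Int.fract θ)⁻¹ k
  | 0 => rfl
  | (k + 1) => by rw [gaussIter, gauss_shift θ k]; rfl

lemma gauss_irr {θ : ℝ} (h : Irrational θ) : ∀ k, Irrational (gaussIter θ k)
  | 0 => h
  | (k + 1) => (fract_irr (gauss_irr h k)).inv

lemma gauss_gt_one {θ : ℝ} (h : Irrational θ) (k : ℕ) : 1 < gaussIter θ (k + 1) := by
  have h1 := fract_pos_irr (gauss_irr h k)
  have h2 := Int.fract_lt_one (gaussIter θ k)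
  rw [gaussIter]
  exact (one_lt_inv₀ h1).mpr h2

lemma cfA_shift (θ : ℝ) (k : ℕ) : cfA θ (k + 1) = cfA (Int.fract θ)⁻¹ k := by
  rw [cfA, cfA, gauss_shift]

lemma cfA_one_le {θ : ℝ} (h : Irrational θ) (k : ℕ) : 1 ≤ cfA θ (k + 1) :=
  Int.le_floor.mpr (by exact_mod_cast (gauss_gt_one h k).le)

lemma cfA_one_le' {θ : ℝ} (h : Irrational θ) (h1 : 1 < θ) (k : ℕ) : 1 ≤ cfA θ k := by
  cases k with
  | zero => exact Int.le_floor.mpr (by exact_mod_cast h1.le)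
  | succ k => exact cfA_one_le h k

/- ### Auxiliary numerators and denominators, with index shifted by one -/

noncomputable def pA (θ : ℝ) : ℕ → ℤ
  | 0 => 1
  | 1 => cfA θ 0
  | n + 2 => cfA θ (n + 1) * pA θ (n + 1) + pA θ n

noncomputable def qA (θ : ℝ) : ℕ → ℤ
  | 0 => 0
  | 1 => 1
  | n + 2 => cfA θ (n + 1) * qA θ (n + 1) + qA θ n

lemma pA_eq (θ : ℝ) : ∀ n, pA θ (n + 1) = cfP θ n
  | 0 => rfl
  | 1 => by rw [pA, cfP, pA, pA]
  | (n + 2) => by rw [pA, cfP, pA_eq θ (n + 1), pA_eq θ n]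

lemma qA_eq (θ : ℝ) : ∀ n, qA θ (n + 1) = cfQ θ n
  | 0 => rfl
  | 1 => by rw [qA, cfQ, qA, qA]; ring
  | (n + 2) => by rw [qA, cfQ, qA_eq θ (n + 1), qA_eq θ n]

lemma pA_shift (θ : ℝ) : ∀ n, pA θ (n + 1) = cfA θ 0 * pA (Int.fract θ)⁻¹ n + qA (Int.fract θ)⁻¹ n
  | 0 => by simp [pA, qA]
  | 1 => by simp [pA, qA, cfA_shift θ 0]; ring
  | (n + 2) => by
      rw [pA, pA_shift θ (n + 1), pA_shift θ n, pA, qA, cfA_shift]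
      ring

lemma qA_shift (θ : ℝ) : ∀ n, qA θ (n + 1) = pA (Int.fract θ)⁻¹ n
  | 0 => rfl
  | 1 => by simp [qA, pA, cfA_shift θ 0]
  | (n + 2) => by rw [qA, qA_shift θ (n + 1), qA_shift θ n, pA, cfA_shift]

lemma det_eq (θ : ℝ) : ∀ n, pA θ (n + 1) * qA θ n - pA θ n * qA θ (n + 1) = (-1) ^ (n + 1)
  | 0 => by simp [pA, qA]
  | (n + 1) => by
      rw [pA, qA, pow_succ, ← det_eq θ n]
      ring

/- ### Positivity and monotonicity -/

lemma qA_nonneg {θ : ℝ} (h : Irrational θ) : ∀ n, 0 ≤ qA θ n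
  | 0 => le_refl 0
  | 1 => zero_le_one
  | (n + 2) => by
      rw [qA]
      nlinarith [cfA_one_le h n, qA_nonneg h n, qA_nonneg h (n + 1)]

lemma qA_pos {θ : ℝ} (h : Irrational θ) : ∀ n, 1 ≤ qA θ (n + 1)
  | 0 => le_refl 1
  | (n + 1) => by
      rw [qA]
      nlinarith [cfA_one_le h n, qA_pos h n, qA_nonneg h n]

lemma qA_mono {θ : ℝ} (h : Irrational θ) (n : ℕ) : qA θ (n + 1) ≤ qA θ (n + 2) := by
  rw [qA]
  nlinarith [cfA_one_le h n, qA_pos h n, qA_nonneg h n]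

lemma pA_pos {θ : ℝ} (h : Irrational θ) (h1 : 1 < θ) : ∀ n, 1 ≤ pA θ n
  | 0 => le_refl 1
  | 1 => cfA_one_le' h h1 0
  | (n + 2) => by
      rw [pA]
      nlinarith [cfA_one_le h n, pA_pos h h1 (n + 1), pA_pos h h1 n]

lemma cfQ_pos {θ : ℝ} (h : Irrational θ) (n : ℕ) : 1 ≤ cfQ θ n := by
  rw [← qA_eq]; exact qA_pos h n

lemma cfQ_mono {θ : ℝ} (h : Irrational θ) : Monotone (cfQ θ) := by
  apply monotone_nat_of_le_succ
  intro n
  rw [← qA_eq, ← qA_eq]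
  cases n with
  | zero => simpa [qA] using cfA_one_le h 0
  | succ n => exact qA_mono h (n + 1)

/- ### The fundamental identity -/

lemma gauss_identity : ∀ (n : ℕ) (θ : ℝ), Irrational θ →
    θ * (qA θ (n + 1) * gaussIter θ (n + 1) + qA θ n)
      = pA θ (n + 1) * gaussIter θ (n + 1) + pA θ n := by
  intro n
  induction n with
  | zero =>
      intro θ hθ
      have h0 : Int.fract θ ≠ 0 := (fract_pos_irr hθ).ne'
      have hx : gaussIter θ 1 = (Int.fract θ)⁻¹ := rfl
      have hsub : θ - (cfA θ 0 : ℝ) = Int.fract θ := rfl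
      have hinv : Int.fract θ * (Int.fract θ)⁻¹ = 1 := mul_inv_cancel₀ h0
      rw [hx]
      simp only [pA, qA]
      push_cast
      linear_combination (Int.fract θ)⁻¹ * hsub + hinv
  | succ n ih =>
      intro θ hθ
      have hξirr : Irrational ((Int.fract θ)⁻¹) := (fract_irr hθ).inv
      have hne : Int.fract θ ≠ 0 := (fract_pos_irr hθ).ne'
      have hx : gaussIter θ (n + 2) = gaussIter (Int.fract θ)⁻¹ (n + 1) := gauss_shift θ (n + 1)
      have key := ih (Int.fract θ)⁻¹ hξirr
      have hsub : θ - (cfA θ 0 : ℝ) = Int.fract θ := rfl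
      have hinv : Int.fract θ * (Int.fract θ)⁻¹ = 1 := mul_inv_cancel₀ hne
      rw [hx, qA_shift θ (n + 1), qA_shift θ n, pA_shift θ (n + 1), pA_shift θ n]
      push_cast
      linear_combination
        ((pA (Int.fract θ)⁻¹ (n + 1) : ℝ) * gaussIter (Int.fract θ)⁻¹ (n + 1)
            + (pA (Int.fract θ)⁻¹ n : ℝ)) * hsub
          - Int.fract θ * key
          + ((qA (Int.fract θ)⁻¹ (n + 1) : ℝ) * gaussIter (Int.fract θ)⁻¹ (n + 1)
            + (qA (Int.fract θ)⁻¹ n : ℝ)) * hinv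

/- ### The approximation error bound -/

lemma approx_bound {θ : ℝ} (hθ : Irrational θ) (n : ℕ) :
    1 < ((qA θ (n + 2) : ℝ) + (qA θ (n + 1) : ℝ)) * |θ * (qA θ (n + 1) : ℝ) - (pA θ (n + 1) : ℝ)| := by
  set x : ℝ := gaussIter θ (n + 1) with hxdef
  have hx1 : 1 < x := gauss_gt_one hθ n
  have hid := gauss_identity n θ hθ
  have hq1 : (1 : ℝ) ≤ (qA θ (n + 1) : ℝ) := by exact_mod_cast qA_pos hθ n
  have hq0 : (0 : ℝ) ≤ (qA θ n : ℝ) := by exact_mod_cast qA_nonneg hθ n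
  have hD : (0 : ℝ) < (qA θ (n + 1) : ℝ) * x + (qA θ n : ℝ) := by nlinarith
  -- θ * q_{n+1} - p_{n+1} = ((-1)^n) / D
  have hdet : (pA θ (n + 1) : ℝ) * (qA θ n : ℝ) - (pA θ n : ℝ) * (qA θ (n + 1) : ℝ)
      = (-1 : ℝ) ^ (n + 1) := by exact_mod_cast congrArg (Int.cast : ℤ → ℝ) (det_eq θ n)
  have key : (θ * (qA θ (n + 1) : ℝ) - (pA θ (n + 1) : ℝ))
      * ((qA θ (n + 1) : ℝ) * x + (qA θ n : ℝ)) = (-1 : ℝ) ^ n := by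
    have : (-1 : ℝ) ^ (n + 1) = (-1) * (-1) ^ n := by ring
    nlinarith [hid, hdet]
  have habs : |θ * (qA θ (n + 1) : ℝ) - (pA θ (n + 1) : ℝ)|
      * ((qA θ (n + 1) : ℝ) * x + (qA θ n : ℝ)) = 1 := by
    have := congrArg abs key
    rwa [abs_mul, abs_of_pos hD, abs_pow, abs_neg, abs_one, one_pow] at this
  -- D < qA (n+2) + qA (n+1)
  have hxlt : x < (cfA θ (n + 1) : ℝ) + 1 := by
    have := Int.lt_floor_add_one x
    rw [cfA, ← hxdef]
    exact_mod_cast this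
  have hDlt : (qA θ (n + 1) : ℝ) * x + (qA θ n : ℝ) < (qA θ (n + 2) : ℝ) + (qA θ (n + 1) : ℝ) := by
    have hrec : (qA θ (n + 2) : ℝ) = (cfA θ (n + 1) : ℝ) * (qA θ (n + 1) : ℝ) + (qA θ n : ℝ) := by
      exact_mod_cast congrArg (Int.cast : ℤ → ℝ) (qA.eq_3 θ n)
    nlinarith
  have habspos : 0 < |θ * (qA θ (n + 1) : ℝ) - (pA θ (n + 1) : ℝ)| := by
    rcases eq_or_lt_of_le (abs_nonneg (θ * (qA θ (n + 1) : ℝ) - (pA θ (n + 1) : ℝ))) with he | h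
    · exfalso; rw [← he, zero_mul] at habs; exact zero_ne_one habs
    · exact h
  nlinarith [habs, hDlt, habspos]

/- ### Identification with `Real.convergent` -/

lemma cfA_zero (θ : ℝ) : cfA θ 0 = ⌊θ⌋ := rfl

lemma one_lt_inv_fract {θ : ℝ} (hθ : Irrational θ) : 1 < (Int.fract θ)⁻¹ :=
  (one_lt_inv₀ (fract_pos_irr hθ)).mpr (Int.fract_lt_one θ)

lemma convergent_eq : ∀ (n : ℕ) (θ : ℝ), Irrational θ →
    Real.convergent θ n = (pA θ (n + 1) : ℚ) / (qA θ (n + 1) : ℚ) := by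
  intro n
  induction n with
  | zero =>
      intro θ hθ
      rw [Real.convergent_zero]
      show ((⌊θ⌋ : ℚ)) = (pA θ 1 : ℚ) / (qA θ 1 : ℚ)
      rw [(by rfl : pA θ 1 = cfA θ 0), (by rfl : qA θ 1 = 1), cfA_zero]
      simp
  | succ n ih =>
      intro θ hθ
      have hξirr : Irrational ((Int.fract θ)⁻¹) := (fract_irr hθ).inv
      have hξ1 : 1 < (Int.fract θ)⁻¹ := one_lt_inv_fract hθ
      have hp : (1 : ℤ) ≤ pA (Int.fract θ)⁻¹ (n + 1) := pA_pos hξirr hξ1 (n + 1)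
      have hq : (1 : ℤ) ≤ qA (Int.fract θ)⁻¹ (n + 1) := qA_pos hξirr n
      have hpQ : ((pA (Int.fract θ)⁻¹ (n + 1) : ℚ)) ≠ 0 := by
        exact_mod_cast (lt_of_lt_of_le zero_lt_one hp).ne'
      rw [Real.convergent_succ, ih _ hξirr, pA_shift θ (n + 1), qA_shift θ (n + 1), cfA_zero]
      push_cast
      rw [inv_div, add_div' _ _ _ hpQ]

lemma coprime_pq (θ : ℝ) (n : ℕ) :
    Nat.Coprime (pA θ (n + 1)).natAbs (qA θ (n + 1)).natAbs := by
  have hd := det_eq θ n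
  have : IsCoprime (pA θ (n + 1)) (qA θ (n + 1)) := by
    rcases Nat.even_or_odd (n + 1) with he | ho
    · rw [he.neg_one_pow] at hd
      exact ⟨qA θ n, -(pA θ n), by linear_combination hd⟩
    · rw [ho.neg_one_pow] at hd
      exact ⟨-(qA θ n), pA θ n, by linear_combination -hd⟩
  exact Int.isCoprime_iff_gcd_eq_one.mp this

lemma convergent_den {θ : ℝ} (hθ : Irrational θ) (n : ℕ) :
    ((Real.convergent θ n).den : ℤ) = qA θ (n + 1) ∧ (Real.convergent θ n).num = pA θ (n + 1) := by
  have hq : (0 : ℤ) < qA θ (n + 1) := qA_pos hθ n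
  rw [convergent_eq n θ hθ]
  exact ⟨Rat.den_div_eq_of_coprime hq (coprime_pq θ n), Rat.num_div_eq_of_coprime hq (coprime_pq θ n)⟩

/- ### A rational with large denominator in any interval -/

lemma exists_rat_den_ge {a b : ℝ} (hab : a < b) (d : ℕ) :
    ∃ r : ℚ, (r : ℝ) ∈ Set.Ioo a b ∧ d ≤ r.den := by
  obtain ⟨P, hPle, hPp⟩ := Nat.exists_infinite_primes (max d (⌈(2 : ℝ) / (b - a)⌉₊ + 2))
  have hd : d ≤ P := le_trans (le_max_left _ _) hPle
  have hP2 : 2 ≤ P := hPp.two_le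
  have hPpos : (0 : ℝ) < P := by positivity
  have hPbig : (2 : ℝ) / (b - a) < P := by
    have h1 : (⌈(2 : ℝ) / (b - a)⌉₊ : ℝ) + 2 ≤ P := by
      exact_mod_cast le_trans (le_max_right _ _) hPle
    nlinarith [Nat.le_ceil ((2 : ℝ) / (b - a))]
  have h2P : 2 / (P : ℝ) < b - a := by
    have hba : (0:ℝ) < b - a := by linarith
    rw [div_lt_iff₀ hPpos]
    rw [div_lt_iff₀ hba] at hPbig
    nlinarith
  set m : ℤ := ⌊a * P⌋ + 1 with hm
  have hma : a * P < (m : ℝ) := by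
    rw [hm]; push_cast; exact Int.lt_floor_add_one _
  have hmb : (m : ℝ) ≤ a * P + 1 := by
    have := Int.floor_le (a * P)
    push_cast [hm]
    linarith
  set p : ℤ := if (P : ℤ) ∣ m then m + 1 else m with hp
  have hndvd : ¬ (P : ℤ) ∣ p := by
    rw [hp]
    split_ifs with h
    · rintro ⟨c, hc⟩
      obtain ⟨e, he⟩ := h
      have : (P : ℤ) * (c - e) = 1 := by rw [he] at hc; linarith [hc]
      have := Int.le_of_dvd one_pos ⟨c - e, this.symm⟩
      omega
    · exact h
  have hpa : a * P < p := by
    rw [hp]; split_ifs <;> [exact_mod_cast lt_trans hma (by exact_mod_cast lt_add_one (m:ℝ)); exact hma]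
  have hpb : (p : ℝ) ≤ a * P + 2 := by
    rw [hp]; split_ifs <;> push_cast <;> linarith
  refine ⟨(p : ℚ) / (P : ℚ), ⟨?_, ?_⟩, ?_⟩
  · push_cast
    rw [lt_div_iff₀ hPpos]
    nlinarith
  · push_cast
    rw [div_lt_iff₀ hPpos]
    have h2' : (2:ℝ) < (b - a) * P := by
      rw [div_lt_iff₀ hPpos] at h2P; linarith
    nlinarith
  · -- denominator is exactly P
    have hden : ((p : ℚ) / (P : ℚ)).den ∣ P := by
      have h1 : ((p : ℚ) / ((P : ℤ) : ℚ)) = Rat.divInt p P := by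
        rw [Rat.divInt_eq_div]
      have h2 := Rat.den_dvd p (P : ℤ)
      rw [← h1] at h2
      have : (((p : ℚ) / ((P : ℤ) : ℚ)).den : ℤ) ∣ (P : ℤ) := h2
      exact_mod_cast this
  -- clean up cast difference between ((P:ℤ):ℚ) and ((P:ℕ):ℚ)
    have hden' : ((p : ℚ) / (P : ℚ)).den ∣ P := by
      simpa using hden
    rcases (Nat.Prime.eq_one_or_self_of_dvd hPp _ hden') with h1 | hP
    · exfalso
      have : (((p : ℚ) / (P : ℚ)).num : ℚ) = (p : ℚ) / (P : ℚ) := by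
        rw [← Rat.den_eq_one_iff]; exact h1
      have hPQ : ((P : ℚ)) ≠ 0 := by positivity
      have : (((p : ℚ) / (P : ℚ)).num : ℚ) * P = (p : ℚ) := by
        rw [this, div_mul_cancel₀ _ hPQ]
      have hint : ((p : ℚ) / (P : ℚ)).num * (P : ℤ) = p := by exact_mod_cast this
      exact hndvd ⟨((p : ℚ) / (P : ℚ)).num, by linarith [hint]⟩
    · rw [hP]; exact hd

/- ### The key density lemma -/

lemma exists_good (d : ℕ) {a b : ℝ} (hab : a < b) :
    ∃ θ ∈ Set.Ioo a b, Irrational θ ∧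
      ∃ k, (d : ℤ) ≤ cfQ θ k ∧ Real.exp (d * (cfQ θ k : ℝ)) ≤ (cfQ θ (k + 1) : ℝ) := by
  obtain ⟨r, hrmem, hrden⟩ := exists_rat_den_ge hab d
  set q : ℕ := r.den with hqdef
  have hq1 : 1 ≤ q := r.pos
  have hq0 : (0 : ℝ) < q := by exact_mod_cast hq1
  set E : ℝ := Real.exp (d * q) with hEdef
  have hE0 : 0 < E := Real.exp_pos _
  set δ : ℝ := min (1 / (2 * q ^ 2)) (1 / (q * (E + q + 1))) with hδdef
  have hδ0 : 0 < δ := by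
    apply lt_min <;> positivity
  -- pick an irrational θ in (r, min b (r + δ))
  have hub : (r : ℝ) < min b ((r : ℝ) + δ) := lt_min hrmem.2 (by linarith)
  obtain ⟨θ, hθirr, hθmem⟩ := dense_irrational.exists_mem_open isOpen_Ioo
    (Set.nonempty_Ioo.mpr hub)
  have hθa : a < θ := lt_trans hrmem.1 hθmem.1
  have hθb : θ < b := lt_of_lt_of_le hθmem.2 (min_le_left _ _)
  have hεpos : 0 < θ - (r : ℝ) := by linarith [hθmem.1]
  have hεδ : θ - (r : ℝ) < δ := by
    have := lt_of_lt_of_le hθmem.2 (min_le_right _ _)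
    linarith
  -- Legendre
  have hLeg : |θ - (r : ℝ)| < 1 / (2 * (q : ℝ) ^ 2) := by
    rw [abs_of_pos hεpos]
    exact lt_of_lt_of_le hεδ (min_le_left _ _)
  obtain ⟨n, hn⟩ := Real.exists_rat_eq_convergent hLeg
  obtain ⟨hden, hnum⟩ := convergent_den hθirr n
  rw [← hn] at hden hnum
  -- identify numerator/denominator
  have hQ1 : (qA θ (n + 1) : ℝ) = q := by exact_mod_cast congrArg (Int.cast : ℤ → ℝ) hden.symm
  have hP1 : (pA θ (n + 1) : ℝ) = (r.num : ℝ) := by exact_mod_cast congrArg (Int.cast : ℤ → ℝ) hnum.symm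
  have hrcast : (r : ℝ) = (r.num : ℝ) / (q : ℝ) := Rat.cast_def r
  -- error equals q * ε
  have herr : |θ * (qA θ (n + 1) : ℝ) - (pA θ (n + 1) : ℝ)| = (q : ℝ) * (θ - (r : ℝ)) := by
    have h1 : θ * (q : ℝ) - (r.num : ℝ) = (q : ℝ) * (θ - (r : ℝ)) := by
      rw [hrcast]
      field_simp
      try ring
    rw [hQ1, hP1, h1, abs_of_pos (mul_pos hq0 hεpos)]
  have hbound := approx_bound hθirr n
  rw [herr, hQ1] at hbound
  -- conclude qA (n+2) > E
  have hQ2 : (0 : ℝ) ≤ (qA θ (n + 2) : ℝ) := by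
    exact_mod_cast qA_nonneg hθirr (n + 2)
  have hδle : δ * ((q : ℝ) * (E + q + 1)) ≤ 1 := by
    have h1 : δ ≤ 1 / (q * (E + q + 1)) := min_le_right _ _
    rw [le_div_iff₀ (by positivity)] at h1
    exact h1
  have hfinal : E ≤ (qA θ (n + 2) : ℝ) := by
    have hsum0 : (0 : ℝ) < (qA θ (n + 2) : ℝ) + q := by linarith
    have s1 : 1 < ((qA θ (n + 2) : ℝ) + q) * ((q : ℝ) * δ) :=
      lt_of_lt_of_le hbound (mul_le_mul_of_nonneg_left
        (by nlinarith : (q : ℝ) * (θ - (r : ℝ)) ≤ (q : ℝ) * δ) hsum0.le)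
    have s2 : (E + q + 1) * 1 < (E + q + 1) * (((qA θ (n + 2) : ℝ) + q) * ((q : ℝ) * δ)) :=
      mul_lt_mul_of_pos_left s1 (by positivity)
    have s3 : (E + q + 1) * (((qA θ (n + 2) : ℝ) + q) * ((q : ℝ) * δ))
        = ((qA θ (n + 2) : ℝ) + q) * (δ * ((q : ℝ) * (E + q + 1))) := by ring
    have s4 : ((qA θ (n + 2) : ℝ) + q) * (δ * ((q : ℝ) * (E + q + 1)))
        ≤ ((qA θ (n + 2) : ℝ) + q) * 1 := mul_le_mul_of_nonneg_left hδle hsum0.le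
    linarith
  refine ⟨θ, ⟨hθa, hθb⟩, hθirr, n, ?_, ?_⟩
  · rw [← qA_eq]
    have : (d : ℤ) ≤ (q : ℤ) := by exact_mod_cast hrden
    omega
  · rw [← qA_eq, ← qA_eq]
    have hcfq : ((qA θ (n + 1) : ℤ) : ℝ) = (q : ℝ) := hQ1
    rw [hcfq]
    exact hfinal

/- ### Local constancy of the digits at irrational points -/

lemma gauss_contAt {θ : ℝ} (hθ : Irrational θ) : ∀ k, ContinuousAt (fun t => gaussIter t k) θ
  | 0 => continuousAt_id
  | (k + 1) => by
      have h1 : ContinuousAt (fun t => gaussIter t k) θ := gauss_contAt hθ k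
      have hirr := gauss_irr hθ k
      have hne : gaussIter θ k ≠ (⌊gaussIter θ k⌋ : ℝ) := fun he => hirr.ne_int _ he
      have h2 : ContinuousAt Int.fract (gaussIter θ k) := continuousAt_fract hne
      have h3 : ContinuousAt (fun t => Int.fract (gaussIter t k)) θ :=
        ContinuousAt.comp (g := Int.fract) h2 h1
      have h4 : Int.fract (gaussIter θ k) ≠ 0 := (fract_pos_irr hirr).ne'
      exact (h3.inv₀ h4 : ContinuousAt (fun t => (Int.fract (gaussIter t k))⁻¹) θ)

lemma cfA_eventually {θ : ℝ} (hθ : Irrational θ) (k : ℕ) :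
    ∀ᶠ t in 𝓝 θ, cfA t k = cfA θ k := by
  have hcont := gauss_contAt hθ k
  have hirr := gauss_irr hθ k
  have hlow : (⌊gaussIter θ k⌋ : ℝ) < gaussIter θ k :=
    lt_of_le_of_ne (Int.floor_le _) (fun he => hirr.ne_int _ he.symm)
  have hupp : gaussIter θ k < (⌊gaussIter θ k⌋ : ℝ) + 1 := Int.lt_floor_add_one _
  have hmem : Set.Ioo ((⌊gaussIter θ k⌋ : ℝ)) ((⌊gaussIter θ k⌋ : ℝ) + 1) ∈ 𝓝 (gaussIter θ k) :=
    Ioo_mem_nhds hlow hupp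
  filter_upwards [hcont.preimage_mem_nhds hmem] with t ht
  rw [cfA, cfA]
  rw [Int.floor_eq_iff]
  exact ⟨ht.1.le, ht.2⟩

lemma cfA_eventually_all {θ : ℝ} (hθ : Irrational θ) (K : ℕ) :
    ∀ᶠ t in 𝓝 θ, ∀ j ≤ K, cfA t j = cfA θ j := by
  induction K with
  | zero =>
      filter_upwards [cfA_eventually hθ 0] with t ht j hj
      simpa [Nat.le_zero.mp hj] using ht
  | succ K ih =>
      filter_upwards [ih, cfA_eventually hθ (K + 1)] with t h1 h2 j hj
      rcases Nat.lt_or_ge j (K + 1) with h | h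
      · exact h1 j (Nat.lt_succ_iff.mp h)
      · rw [le_antisymm hj h, h2]

lemma cfQ_congr {t θ : ℝ} {K : ℕ} (h : ∀ j ≤ K, cfA t j = cfA θ j) :
    ∀ j ≤ K, cfQ t j = cfQ θ j := by
  intro j hj
  induction j using Nat.strong_induction_on with
  | _ j ih =>
      match j with
      | 0 => rfl
      | 1 => rw [cfQ, cfQ, h 1 hj]
      | (j + 2) =>
          rw [cfQ, cfQ, h (j + 2) hj, ih (j + 1) (by omega) (by omega), ih j (by omega) (by omega)]

/- ### The good sets and their interiors -/

def goodSet (d : ℕ) : Set ℝ :=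
  {θ | ∃ k, (d : ℤ) ≤ cfQ θ k ∧ Real.exp (d * (cfQ θ k : ℝ)) ≤ (cfQ θ (k + 1) : ℝ)}

lemma dense_interior_good (d : ℕ) : Dense (interior (goodSet d)) := by
  rw [dense_iff_exists_between]
  intro a b hab
  obtain ⟨θ, hθmem, hθirr, k, hk1, hk2⟩ := exists_good d hab
  refine ⟨θ, ?_, hθmem.1, hθmem.2⟩
  rw [mem_interior_iff_mem_nhds]
  filter_upwards [cfA_eventually_all hθirr (k + 1)] with t ht
  have h1 : cfQ t k = cfQ θ k := cfQ_congr ht k (by omega)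
  have h2 : cfQ t (k + 1) = cfQ θ (k + 1) := cfQ_congr ht (k + 1) le_rfl
  exact ⟨k, by rw [h1]; exact hk1, by rw [h1, h2]; exact hk2⟩

/- ### Every point of the residual set is well-approximated -/

lemma wellApproximated_of_good {θ : ℝ} (hθ : Irrational θ)
    (h : ∀ d : ℕ, θ ∈ goodSet d) : WellApproximated θ := by
  have hspec : ∀ d : ℕ, ∃ k, (d : ℤ) ≤ cfQ θ k ∧
      Real.exp (d * (cfQ θ k : ℝ)) ≤ (cfQ θ (k + 1) : ℝ) := h
  choose w hw1 hw2 using hspec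
  set k : ℕ → ℕ := fun n => Nat.rec (w 1) (fun _ kn => w ((cfQ θ kn).toNat + 1)) n with hkdef
  have hk0 : k 0 = w 1 := rfl
  have hksucc : ∀ n, k (n + 1) = w ((cfQ θ (k n)).toNat + 1) := fun n => rfl
  -- growth of cfQ along the sequence
  have hgrow : ∀ n : ℕ, (n + 1 : ℤ) ≤ cfQ θ (k n) := by
    intro n
    induction n with
    | zero => rw [hk0]; simpa using hw1 1
    | succ n ih =>
        have h1 := hw1 ((cfQ θ (k n)).toNat + 1)
        rw [← hksucc] at h1
        have : ((cfQ θ (k n)).toNat : ℤ) = cfQ θ (k n) := Int.toNat_of_nonneg (by linarith)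
        push_cast at h1 ⊢
        omega
  have hlt : ∀ n, cfQ θ (k n) < cfQ θ (k (n + 1)) := by
    intro n
    have h1 := hw1 ((cfQ θ (k n)).toNat + 1)
    rw [← hksucc] at h1
    have : ((cfQ θ (k n)).toNat : ℤ) = cfQ θ (k n) := Int.toNat_of_nonneg
      (by linarith [hgrow n])
    omega
  have hmono : StrictMono k := by
    apply strictMono_nat_of_lt_succ
    intro n
    by_contra hcon
    exact absurd (cfQ_mono hθ (Nat.le_of_not_lt hcon)) (not_le.mpr (hlt n))
  refine ⟨hθ, k, hmono, ?_⟩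
  intro C hC
  -- squeeze against exp (C - n)
  apply squeeze_zero' (g := fun n : ℕ => Real.exp (C - n))
  · filter_upwards with n
    have := cfQ_pos hθ (k n + 1)
    positivity
  · rw [eventually_atTop]
    refine ⟨⌈C⌉₊ + 1, ?_⟩
    intro n hn
    obtain ⟨m, rfl⟩ : ∃ m, n = m + 1 := ⟨n - 1, by omega⟩
    set D : ℕ := (cfQ θ (k m)).toNat + 1 with hD
    have hQn : (1 : ℝ) ≤ (cfQ θ (k (m + 1)) : ℝ) := by exact_mod_cast cfQ_pos hθ (k (m + 1))
    have hQ'pos : (0 : ℝ) < (cfQ θ (k (m + 1) + 1) : ℝ) := by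
      exact_mod_cast lt_of_lt_of_le zero_lt_one (cfQ_pos hθ (k (m + 1) + 1))
    have hexp : Real.exp (D * (cfQ θ (k (m + 1)) : ℝ)) ≤ (cfQ θ (k (m + 1) + 1) : ℝ) := by
      have := hw2 D
      rwa [← hksucc] at this
    have hDge : ((m : ℝ) + 2) ≤ (D : ℝ) := by
      have h1 := hgrow m
      have h2 : ((cfQ θ (k m)).toNat : ℤ) = cfQ θ (k m) := Int.toNat_of_nonneg (by linarith)
      have : ((m : ℤ) + 2) ≤ (D : ℤ) := by push_cast [hD]; omega
      exact_mod_cast this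
    have hCle : C ≤ (⌈C⌉₊ : ℝ) := Nat.le_ceil C
    have hnC : C + 1 ≤ ((m : ℝ) + 1) := by
      have : ((⌈C⌉₊ : ℝ) + 1) ≤ ((m : ℝ) + 1) := by
        have : (⌈C⌉₊ : ℕ) ≤ m := by omega
        have := (Nat.cast_le (α := ℝ)).mpr this
        linarith
      linarith
    have hCD : C - (D : ℝ) ≤ -2 := by linarith
    have hprod : (C - (D : ℝ)) * (cfQ θ (k (m + 1)) : ℝ) ≤ (C - (D : ℝ)) := by
      nlinarith
    calc Real.exp (C * (cfQ θ (k (m + 1)) : ℝ)) / (cfQ θ (k (m + 1) + 1) : ℝ)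
        ≤ Real.exp (C * (cfQ θ (k (m + 1)) : ℝ)) / Real.exp (D * (cfQ θ (k (m + 1)) : ℝ)) :=
          div_le_div_of_nonneg_left (Real.exp_nonneg _) (Real.exp_pos _) hexp
      _ = Real.exp (C * (cfQ θ (k (m + 1)) : ℝ) - D * (cfQ θ (k (m + 1)) : ℝ)) :=
          (Real.exp_sub _ _).symm
      _ ≤ Real.exp (C - ((m + 1 : ℕ) : ℝ)) := by
          apply Real.exp_le_exp.mpr
          have hcast : ((m + 1 : ℕ) : ℝ) = (m : ℝ) + 1 := by push_cast; ring
          rw [hcast]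
          linarith
  · have h1 : Tendsto (fun n : ℕ => -(n : ℝ)) atTop atBot :=
      tendsto_neg_atBot_iff.mpr tendsto_natCast_atTop_atTop
    have h2 : Tendsto (fun n : ℕ => C + -(n : ℝ)) atTop atBot :=
      tendsto_atBot_add_const_left atTop C h1
    have h3 : Tendsto (fun n : ℕ => C - (n : ℝ)) atTop atBot := by
      simpa [sub_eq_add_neg] using h2
    exact Real.tendsto_exp_atBot.comp h3

/-- Well-approximated irrational numbers are generic in the sense of
Baire category: they contain a dense `G_δ` subset of `ℝ`. -/
theorem wellApproximated_generic :
    ∃ S : Set ℝ, IsGδ S ∧ Dense S ∧ S ⊆ {θ : ℝ | WellApproximated θ} := by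
  refine ⟨{θ : ℝ | Irrational θ} ∩ ⋂ d : ℕ, interior (goodSet d), ?_, ?_, ?_⟩
  · exact IsGδ.inter IsGδ.setOf_irrational (IsGδ.iInter fun d => isOpen_interior.isGδ)
  · exact Dense.inter_of_Gδ IsGδ.setOf_irrational
      (IsGδ.iInter fun d => isOpen_interior.isGδ) dense_irrational
      (dense_iInter_of_isOpen (fun d => isOpen_interior) dense_interior_good)
  · rintro θ ⟨hθirr, hθmem⟩
    refine wellApproximated_of_good hθirr fun d => ?_
    exact interior_subset (Set.mem_iInter.mp hθmem d)
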